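/- For any prime p and positive integers m, t, the number of monomials x_0^{e_0}···x_m^{e_m} of total degree t whose multinomial coefficient t!/(e_0!···e_m!) is divisible by p equals C(m+t, t) − Π_λ C(m + t_λ, t_λ), where t_λ are the base-p digits of t. This quantity is 0 if and only if (t < p) or (m ≤ 1 and all digits t_0,...,t_{J−1} of t equal p−1, J being the top digit position) — i.e., iff m = 1 and t = t_J p^J − 1, or t < p. -/
import Mathlib

open Finset Nat

private lemma Ssum_eq {p : ℕ} (hp : 1 < p) (n : ℕ) :
    (p.digits n).sum = n % p + (p.digits (n / p)).sum := by
  rcases Nat.eq_zero_or_pos n with rfl | hn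
  · simp
  · rw [Nat.digits_def' hp hn]; simp

private lemma Ssmall {p : ℕ} (hp : 1 < p) {n : ℕ} (h : n < p) : (p.digits n).sum = n := by
  rcases Nat.eq_zero_or_pos n with rfl | hn
  · simp
  · rw [Nat.digits_of_lt p n hn.ne' h]; simp

private lemma key {p : ℕ} (hp : p.Prime) {ι : Type*} (s : Finset ι) (f : ι → ℕ) :
    ((p.digits (∑ i ∈ s, f i)).sum ≤ ∑ i ∈ s, (p.digits (f i)).sum) ∧
    (¬ p ∣ Nat.multinomial s f ↔
      ∑ i ∈ s, (p.digits (f i)).sum = (p.digits (∑ i ∈ s, f i)).sum) := by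
  haveI : Fact p.Prime := ⟨hp⟩
  set T := ∑ i ∈ s, f i with hT
  set M := Nat.multinomial s f with hM
  have hM0 : M ≠ 0 := (Nat.multinomial_pos s f).ne'
  have hprod0 : (∏ i ∈ s, (f i)!) ≠ 0 := by positivity
  have hspec : (∏ i ∈ s, (f i)!) * M = T ! := Nat.multinomial_spec s f
  -- factorization identity at p
  have h1 : (∑ i ∈ s, ((f i)!).factorization p) + M.factorization p
      = (T !).factorization p := by
    rw [← hspec, Nat.factorization_mul hprod0 hM0, Finsupp.add_apply,
      Nat.factorization_prod (fun i _ => (Nat.factorial_pos (f i)).ne'), Finset.sum_apply']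
  -- Legendre
  have hleg : ∀ n : ℕ, (p - 1) * (n !).factorization p = n - (p.digits n).sum := by
    intro n
    rw [Nat.factorization_def _ hp]
    exact sub_one_mul_padicValNat_factorial n
  have h2 : (p - 1) * ((T !).factorization p) = T - (p.digits T).sum := hleg T
  have h3 : (p - 1) * ∑ i ∈ s, ((f i)!).factorization p
      = T - ∑ i ∈ s, (p.digits (f i)).sum := by
    rw [Finset.mul_sum]
    have h4 : ∑ i ∈ s, (p - 1) * ((f i)!).factorization p
        = ∑ i ∈ s, (f i - (p.digits (f i)).sum) := by
      exact Finset.sum_congr rfl fun i _ => hleg (f i)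
    rw [h4, hT, ← Finset.sum_tsub_distrib]
    intro i _; exact Nat.digit_sum_le p (f i)
  -- arithmetic
  have hST : (p.digits T).sum ≤ T := Nat.digit_sum_le p T
  have hSS : ∑ i ∈ s, (p.digits (f i)).sum ≤ T := by
    rw [hT]; exact Finset.sum_le_sum fun i _ => Nat.digit_sum_le p (f i)
  set c := M.factorization p with hc
  set k := (p - 1) * c with hk
  have hck : c ≤ k := by
    rw [hk]; exact Nat.le_mul_of_pos_left c (by have := hp.two_le; omega)
  have hmain : (T - ∑ i ∈ s, (p.digits (f i)).sum) + k = T - (p.digits T).sum := by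
    rw [← h2, ← h1, Nat.mul_add, h3, hk]
  have hdvd : p ∣ M ↔ 1 ≤ c := hp.dvd_iff_one_le_factorization hM0
  have hk0 : k = 0 ↔ c = 0 := by
    constructor
    · intro h; omega
    · intro h; rw [hk, h, Nat.mul_zero]
  constructor
  · omega
  · rw [hdvd]; omega

private lemma Ssubadd {p : ℕ} (hp : p.Prime) (a b : ℕ) :
    (p.digits (a + b)).sum ≤ (p.digits a).sum + (p.digits b).sum := by
  have h := (key hp (Finset.univ : Finset (Fin 2)) ![a, b]).1
  simpa [Fin.sum_univ_two] using h

private lemma S_add_pow {p : ℕ} (hp : 1 < p) :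
    ∀ (j x y : ℕ), x < p ^ j →
      (p.digits (x + y * p ^ j)).sum = (p.digits x).sum + (p.digits y).sum := by
  intro j
  induction j with
  | zero =>
    intro x y hx
    have : x = 0 := by simpa using hx
    subst this
    simp
  | succ j ih =>
    intro x y hx
    have hp0 : 0 < p := by omega
    have hmod : (x + y * p ^ (j + 1)) % p = x % p := by
      rw [pow_succ]
      rw [← Nat.mul_assoc]
      exact Nat.add_mul_mod_self_right x (y * p ^ j) p
    have hdivp : (x + y * p ^ (j + 1)) / p = x / p + y * p ^ j := by
      rw [pow_succ, ← Nat.mul_assoc]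
      exact Nat.add_mul_div_right x (y * p ^ j) hp0
    have hxd : x / p < p ^ j := by
      rw [Nat.div_lt_iff_lt_mul hp0, ← pow_succ]; exact hx
    rw [Ssum_eq hp, hmod, hdivp, ih _ y hxd, ← Nat.add_assoc, ← Ssum_eq hp]

private lemma digits_getD {p : ℕ} (hp : 1 < p) :
    ∀ (j t : ℕ), (p.digits t).getD j 0 = t / p ^ j % p := by
  intro j
  induction j with
  | zero =>
    intro t
    rcases Nat.eq_zero_or_pos t with rfl | ht
    · simp
    · rw [Nat.digits_def' hp ht]; simp
  | succ j ih =>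
    intro t
    rcases Nat.eq_zero_or_pos t with rfl | ht
    · simp
    · rw [Nat.digits_def' hp ht]
      simp only [List.getD_cons_succ]
      rw [ih (t / p), Nat.div_div_eq_div_mul, ← pow_succ']

private lemma step {p : ℕ} (hp : p.Prime) {n : ℕ} (e : Fin n → ℕ) :
    (¬ p ∣ Nat.multinomial Finset.univ e) ↔
      ((∑ i, e i % p) = (∑ i, e i) % p ∧
        ¬ p ∣ Nat.multinomial Finset.univ (fun i => e i / p)) := by
  have hp1 : 1 < p := hp.one_lt
  have hp0 : 0 < p := by omega
  set t := ∑ i, e i with ht0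
  set r : Fin n → ℕ := fun i => e i % p with hr
  set q : Fin n → ℕ := fun i => e i / p with hq
  have ht : (∑ i, r i) + p * ∑ i, q i = t := by
    rw [ht0, Finset.mul_sum, ← Finset.sum_add_distrib]
    exact Finset.sum_congr rfl fun i _ => Nat.mod_add_div (e i) p
  have hmod : (∑ i, r i) % p = t % p := by
    conv_rhs => rw [← ht]
    rw [Nat.add_mul_mod_self_left]
  set c := (∑ i, r i) / p with hcdef
  have hc : ∑ i, r i = t % p + p * c := by
    have hdm := Nat.div_add_mod (∑ i, r i) p
    rw [hmod, ← hcdef] at hdm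
    omega
  have htp : t % p < p := Nat.mod_lt _ hp0
  have hdiv : t / p = ∑ i, q i + c := by
    have h : t = t % p + p * (∑ i, q i + c) := by rw [Nat.mul_add]; omega
    rw [h, Nat.add_mul_div_left _ _ hp0, Nat.div_eq_of_lt htp, Nat.zero_add]
  have hSE : ∑ i, (p.digits (e i)).sum = (∑ i, r i) + ∑ i, (p.digits (q i)).sum := by
    rw [← Finset.sum_add_distrib]
    exact Finset.sum_congr rfl fun i _ => Ssum_eq hp1 (e i)
  have hSt : (p.digits t).sum = t % p + (p.digits (t / p)).sum := Ssum_eq hp1 t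
  -- inequality for cons tuple
  have hineq1 : (p.digits (∑ i, q i + c)).sum
      ≤ (p.digits c).sum + ∑ i, (p.digits (q i)).sum := by
    have h := (key hp (Finset.univ : Finset (Fin (n + 1))) (Fin.cons c q)).1
    rw [Fin.sum_univ_succ] at h
    simp only [Fin.cons_zero, Fin.cons_succ] at h
    rw [Fin.sum_univ_succ] at h
    simp only [Fin.cons_zero, Fin.cons_succ] at h
    rw [Nat.add_comm c (∑ i, q i)] at h
    exact h
  have hSc : (p.digits c).sum ≤ c := Nat.digit_sum_le p c
  have hkeyE := (key hp Finset.univ e).2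
  have hkeyQ := (key hp Finset.univ q).2
  have hineqQ := (key hp Finset.univ q).1
  rw [← ht0] at hkeyE
  rw [hkeyE, hkeyQ]
  constructor
  · intro h
    -- h : ∑ S(e i) = S t
    have h2 : (∑ i, r i) + ∑ i, (p.digits (q i)).sum
        = t % p + (p.digits (∑ i, q i + c)).sum := by
      rw [← hSE, ← hdiv, ← hSt, h]
    have hc0 : c = 0 := by
      have h3 : (∑ i, r i) + ∑ i, (p.digits (q i)).sum
          ≤ t % p + c + ∑ i, (p.digits (q i)).sum := by
        calc (∑ i, r i) + ∑ i, (p.digits (q i)).sum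
            = t % p + (p.digits (∑ i, q i + c)).sum := h2
          _ ≤ t % p + ((p.digits c).sum + ∑ i, (p.digits (q i)).sum) :=
              Nat.add_le_add_left hineq1 _
          _ ≤ t % p + c + ∑ i, (p.digits (q i)).sum := by omega
      have hpc : p * c ≥ 2 * c := Nat.mul_le_mul_right c (by omega)
      omega
    constructor
    · have hgoal : ∑ i, r i = t % p := by omega
      exact hgoal
    · have hq0 : ∑ i, q i + c = ∑ i, q i := by omega
      rw [hq0] at h2
      omega
  · rintro ⟨h1, h2⟩
    have h1' : ∑ i, r i = t % p := h1
    have hcc : c ≤ p * c := Nat.le_mul_of_pos_left c hp0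
    have hc0 : c = 0 := by omega
    show ∑ i, (p.digits (e i)).sum = (p.digits t).sum
    rw [hSE, hSt, hdiv, hc0, Nat.add_zero, ← h2]
    omega

private lemma card_adt : ∀ (k n : ℕ), (Finset.Nat.antidiagonalTuple (k + 1) n).card = (k + n).choose n := by
  intro k
  induction k with
  | zero => intro n; simp [Nat.choose_self]
  | succ k ih =>
    intro n
    have hbij : (Finset.Nat.antidiagonalTuple (k + 2) n).card
        = ((Finset.range (n + 1)).sigma
            (fun i => Finset.Nat.antidiagonalTuple (k + 1) (n - i))).card := by
      refine Finset.card_bij' (fun e _ => (⟨e 0, Fin.tail e⟩ : Σ _ : ℕ, Fin (k + 1) → ℕ))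
        (fun x _ => Fin.cons x.1 x.2) ?_ ?_ ?_ ?_
      · intro e he
        rw [Finset.Nat.mem_antidiagonalTuple] at he
        simp only [Finset.mem_sigma, Finset.mem_range, Finset.Nat.mem_antidiagonalTuple]
        have hsum : e 0 + ∑ i, Fin.tail e i = n := by
          rw [← he]; exact (Fin.sum_univ_succ e).symm
        omega
      · intro x hx
        simp only [Finset.mem_sigma, Finset.mem_range, Finset.Nat.mem_antidiagonalTuple] at hx
        rw [Finset.Nat.mem_antidiagonalTuple, Fin.sum_univ_succ]
        simp only [Fin.cons_zero, Fin.cons_succ]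
        omega
      · intro e _; exact Fin.cons_self_tail e
      · intro x _
        refine Sigma.ext ?_ ?_
        · simp
        · simp [Fin.tail_cons]
    rw [hbij, Finset.card_sigma]
    have h1 : ∀ i ∈ Finset.range (n + 1),
        (Finset.Nat.antidiagonalTuple (k + 1) (n - i)).card = (k + (n - i)).choose (n - i) :=
      fun i _ => ih (n - i)
    rw [Finset.sum_congr rfl h1]
    have h2 : ∑ i ∈ Finset.range (n + 1), (k + (n - i)).choose (n - i)
        = ∑ i ∈ Finset.range (n + 1), (k + i).choose i := by
      have := Finset.sum_range_reflect (fun i => (k + i).choose i) (n + 1)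
      rw [← this]
      exact Finset.sum_congr rfl fun i hi => by
        rw [Finset.mem_range] at hi
        congr 1 <;> omega
    rw [h2]
    have h3 : ∀ i, (k + i).choose i = (i + k).choose k := by
      intro i
      have := Nat.choose_symm (Nat.le_add_left k i)
      rw [Nat.add_sub_cancel] at this
      rw [Nat.add_comm k i, this]
    rw [Finset.sum_congr rfl fun i _ => h3 i, Nat.sum_range_add_choose n k]
    have h4 := Nat.choose_symm (show k + 1 ≤ n + k + 1 by omega)
    have h5 : n + k + 1 - (k + 1) = n := by omega
    rw [h5] at h4
    rw [← h4]
    congr 1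
    omega

private lemma card_step {p : ℕ} (hp : p.Prime) {n t : ℕ} :
    ((Finset.Nat.antidiagonalTuple n t).filter
        (fun e => ¬ p ∣ Nat.multinomial Finset.univ e)).card
      = (Finset.Nat.antidiagonalTuple n (t % p)).card *
        ((Finset.Nat.antidiagonalTuple n (t / p)).filter
          (fun e => ¬ p ∣ Nat.multinomial Finset.univ e)).card := by
  have hp0 : 0 < p := hp.pos
  rw [← Finset.card_product]
  refine Finset.card_bij' (fun e _ => ((fun i => e i % p), (fun i => e i / p)))
    (fun rq _ => fun i => rq.1 i + p * rq.2 i) ?_ ?_ ?_ ?_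
  · intro e he
    simp only [Finset.mem_filter, Finset.Nat.mem_antidiagonalTuple] at he
    obtain ⟨hsum, hnd⟩ := he
    rw [step hp] at hnd
    obtain ⟨h1, h2⟩ := hnd
    simp only [Finset.mem_product, Finset.mem_filter, Finset.Nat.mem_antidiagonalTuple]
    refine ⟨by rw [h1, hsum], ?_, h2⟩
    -- ∑ e i / p = t / p
    have ht : (∑ i, e i % p) + p * ∑ i, (e i / p) = t := by
      rw [← hsum, Finset.mul_sum, ← Finset.sum_add_distrib]
      exact Finset.sum_congr rfl fun i _ => Nat.mod_add_div (e i) p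
    rw [h1, hsum] at ht
    have := Nat.div_add_mod t p
    have hd : p * (t / p) = p * ∑ i, e i / p := by omega
    exact (Nat.eq_of_mul_eq_mul_left hp0 hd).symm
  · intro rq hrq
    simp only [Finset.mem_product, Finset.mem_filter, Finset.Nat.mem_antidiagonalTuple] at hrq
    obtain ⟨hr, hq, hnd⟩ := hrq
    have hrlt : ∀ i, rq.1 i < p := by
      intro i
      have : rq.1 i ≤ ∑ j, rq.1 j :=
        Finset.single_le_sum (fun j _ => Nat.zero_le _) (Finset.mem_univ i)
      have := Nat.mod_lt t hp0
      omega
    have hmod : ∀ i, (rq.1 i + p * rq.2 i) % p = rq.1 i := by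
      intro i
      rw [Nat.add_mul_mod_self_left, Nat.mod_eq_of_lt (hrlt i)]
    have hdiv : ∀ i, (rq.1 i + p * rq.2 i) / p = rq.2 i := by
      intro i
      rw [Nat.add_mul_div_left _ _ hp0, Nat.div_eq_of_lt (hrlt i), Nat.zero_add]
    simp only [Finset.mem_filter, Finset.Nat.mem_antidiagonalTuple]
    have hsum : ∑ i, (rq.1 i + p * rq.2 i) = t := by
      rw [Finset.sum_add_distrib, ← Finset.mul_sum, hr, hq, Nat.mod_add_div]
    refine ⟨hsum, ?_⟩
    rw [step hp]
    constructor
    · simp only [hmod, hsum, hr]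
    · have : (fun i => (rq.1 i + p * rq.2 i) / p) = rq.2 := by
        funext i; exact hdiv i
      rw [this]
      exact hnd
  · intro e _
    funext i
    exact Nat.mod_add_div (e i) p
  · intro rq hrq
    simp only [Finset.mem_product, Finset.mem_filter, Finset.Nat.mem_antidiagonalTuple] at hrq
    obtain ⟨hr, hq, hnd⟩ := hrq
    have hrlt : ∀ i, rq.1 i < p := by
      intro i
      have : rq.1 i ≤ ∑ j, rq.1 j :=
        Finset.single_le_sum (fun j _ => Nat.zero_le _) (Finset.mem_univ i)
      have := Nat.mod_lt t hp0
      omega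
    refine Prod.ext ?_ ?_
    · funext i
      simp only
      rw [Nat.add_mul_mod_self_left, Nat.mod_eq_of_lt (hrlt i)]
    · funext i
      simp only
      rw [Nat.add_mul_div_left _ _ hp0, Nat.div_eq_of_lt (hrlt i), Nat.zero_add]

private lemma mult_zero_fn {n : ℕ} : Nat.multinomial Finset.univ (fun _ : Fin n => 0) = 1 := by
  have h := Nat.multinomial_spec Finset.univ (fun _ : Fin n => 0)
  simp at h
  exact h

private lemma count_formula {p : ℕ} (hp : p.Prime) (m : ℕ) :
    ∀ t, ((Finset.Nat.antidiagonalTuple (m + 1) t).filter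
        (fun e => ¬ p ∣ Nat.multinomial Finset.univ e)).card
      = ((p.digits t).map (fun d => (m + d).choose d)).prod := by
  intro t
  induction t using Nat.strong_induction_on with
  | _ t ih =>
    rcases Nat.eq_zero_or_pos t with rfl | ht
    · rw [Finset.Nat.antidiagonalTuple_zero_right]
      rw [Finset.filter_singleton]
      have h1 : ¬ p ∣ Nat.multinomial Finset.univ (0 : Fin (m + 1) → ℕ) := by
        have : Nat.multinomial Finset.univ (0 : Fin (m + 1) → ℕ) = 1 := mult_zero_fn
        rw [this, Nat.dvd_one]
        exact hp.ne_one
      rw [if_pos h1]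
      simp
    · have hlt : t / p < t := Nat.div_lt_self ht hp.one_lt
      rw [card_step hp, card_adt m (t % p), ih (t / p) hlt,
        Nat.digits_def' hp.one_lt ht]
      simp

private lemma prod_range_getD (f : ℕ → ℕ) (hf : f 0 = 1) :
    ∀ (K : ℕ) (L : List ℕ), L.length ≤ K →
      ∏ l ∈ Finset.range K, f (L.getD l 0) = (L.map f).prod := by
  intro K
  induction K with
  | zero =>
    intro L hL
    have : L = [] := List.length_eq_zero_iff.mp (Nat.le_zero.mp hL)
    subst this
    simp
  | succ K ihK =>
    intro L hL
    cases L with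
    | nil => simp [hf]
    | cons a L' =>
      rw [Finset.prod_range_succ']
      simp only [List.getD_cons_succ, List.getD_cons_zero]
      rw [ihK L' (by simpa using hL)]
      simp [Nat.mul_comm]

private lemma prod_digits_cond {p : ℕ} (hp : 1 ≤ p) :
    ∀ (L : List ℕ), (∀ i, i + 1 < L.length → L.getD i 0 = p - 1) →
      (L.map (· + 1)).prod = Nat.ofDigits p L + 1 := by
  intro L
  induction L with
  | nil => simp
  | cons a L' ih =>
    intro hL
    cases L' with
    | nil => simp [Nat.ofDigits]
    | cons b L'' =>
      have ha : a = p - 1 := hL 0 (by simp)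
      have hrec := ih (fun i hi => hL (i + 1) (by simpa using hi))
      rw [List.map_cons, List.prod_cons, Nat.ofDigits_cons, hrec, ha]
      push_cast
      have h1 : p - 1 + 1 = p := by omega
      rw [h1, Nat.mul_add, Nat.mul_one]
      omega

private lemma witness_m2 {p m t : ℕ} (hp : p.Prime) (hm : 2 ≤ m) (hpt : p ≤ t) :
    ∃ e ∈ Finset.Nat.antidiagonalTuple (m + 1) t,
      p ∣ Nat.multinomial Finset.univ e := by
  have hp1 : 1 < p := hp.one_lt
  set E : ℕ → ℕ := fun i => if i = 0 then 1 else if i = 1 then p - 1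
    else if i = 2 then t - p else 0 with hE
  have hE0 : ∀ x, 3 ≤ x → E x = 0 := by
    intro x hx
    simp only [hE]
    rw [if_neg (by omega), if_neg (by omega), if_neg (by omega)]
  have hsum3 : ∀ (g : ℕ → ℕ), g 0 = 0 →
      ∑ i : Fin (m + 1), g (E i.val) = g (E 0) + g (E 1) + g (E 2) := by
    intro g hg
    rw [Fin.sum_univ_eq_sum_range (fun i => g (E i)) (m + 1)]
    rw [← Finset.sum_subset (Finset.range_subset_range.mpr (show 3 ≤ m + 1 by omega))
      (fun x _ hx => by
        rw [hE0 x (by simpa using hx), hg])]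
    rw [Finset.sum_range_succ, Finset.sum_range_succ, Finset.sum_range_succ,
      Finset.sum_range_zero, Nat.zero_add]
  have hEv : E 0 = 1 ∧ E 1 = p - 1 ∧ E 2 = t - p := by
    refine ⟨?_, ?_, ?_⟩ <;> simp [hE]
  have hsumt : ∑ i : Fin (m + 1), E i.val = t := by
    have h := hsum3 id rfl
    simp only [id_eq] at h
    rw [h, hEv.1, hEv.2.1, hEv.2.2]
    omega
  have hSsum : ∑ i : Fin (m + 1), (p.digits (E i.val)).sum
      = 1 + (p - 1) + (p.digits (t - p)).sum := by
    rw [hsum3 (fun n => (p.digits n).sum) (by simp)]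
    rw [hEv.1, hEv.2.1, hEv.2.2, Ssmall hp1 (show 1 < p from hp1),
      Ssmall hp1 (show p - 1 < p by omega)]
  have hSp : (p.digits p).sum = 1 := by
    rw [Ssum_eq hp1 p, Nat.mod_self, Nat.div_self hp.pos, Ssmall hp1 hp1]
  have hsub : (p.digits t).sum ≤ (p.digits (t - p)).sum + 1 := by
    have h := Ssubadd hp (t - p) p
    rw [show t - p + p = t by omega, hSp] at h
    exact h
  refine ⟨fun i : Fin (m + 1) => E i.val, Finset.Nat.mem_antidiagonalTuple.mpr hsumt, ?_⟩
  by_contra hnd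
  have heq := ((key hp Finset.univ (fun i : Fin (m + 1) => E i.val)).2).mp hnd
  rw [hsumt, hSsum] at heq
  omega

private lemma witness_m1 {p t : ℕ} (hp : p.Prime) (ht : 1 ≤ t) {j : ℕ}
    (hj : j + 1 < (p.digits t).length) (hd : (p.digits t).getD j 0 ≠ p - 1) :
    ∃ e ∈ Finset.Nat.antidiagonalTuple 2 t,
      p ∣ Nat.multinomial Finset.univ e := by
  have hp1 : 1 < p := hp.one_lt
  have hp0 : 0 < p := hp.pos
  have ht0 : t ≠ 0 := by omega
  set d := t / p ^ j % p with hddef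
  have hdval : (p.digits t).getD j 0 = d := digits_getD hp1 j t
  have hdp : d < p := Nat.mod_lt _ hp0
  have hd2 : d ≤ p - 2 := by
    rw [hdval] at hd
    omega
  have hpow : p ^ (j + 1) ≤ t := by
    rw [Nat.digits_len p t hp1 ht0] at hj
    calc p ^ (j + 1) ≤ p ^ (Nat.log p t) :=
          Nat.pow_le_pow_right hp.one_lt.le (by omega)
      _ ≤ t := Nat.pow_log_le_self p ht0
  set v := t / p ^ (j + 1) with hvdef
  have hv : 1 ≤ v := (Nat.one_le_div_iff (pow_pos hp0 _)).mpr hpow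
  set w := v - 1 with hwdef
  have hvw : v = w + 1 := by omega
  set u := t % p ^ j with hudef
  have hu : u < p ^ j := Nat.mod_lt _ (pow_pos hp0 j)
  have hT : t = u + (d + p * v) * p ^ j := by
    have h1 : u + p ^ j * (t / p ^ j) = t := Nat.mod_add_div t (p ^ j)
    have h2 : t / p ^ j = d + p * v := by
      have h3 := Nat.mod_add_div (t / p ^ j) p
      have h4 : t / p ^ j / p = v := by
        rw [hvdef, Nat.div_div_eq_div_mul, ← pow_succ]
      rw [hddef, ← h4]
      omega
    rw [← h1, h2]
    ring
  obtain ⟨q, hq⟩ : ∃ q, p = q + 1 := ⟨p - 1, by omega⟩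
  have hq1 : q = p - 1 := by omega
  set a := (d + 1) * p ^ j with hadef
  set b := u + (q + p * w) * p ^ j with hbdef
  have hab : a + b = t := by
    rw [hadef, hbdef, hT, hvw, hq]
    ring
  -- digit sums
  have hSt : (p.digits t).sum = (p.digits u).sum + (d + (p.digits v).sum) := by
    conv_lhs => rw [hT]
    rw [S_add_pow hp1 j u (d + p * v) hu]
    have : d + p * v = d + v * p ^ 1 := by rw [pow_one]; ring
    rw [this, S_add_pow hp1 1 d v (by rwa [pow_one]), Ssmall hp1 hdp]
  have hSa : (p.digits a).sum = d + 1 := by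
    have : a = 0 + (d + 1) * p ^ j := by rw [Nat.zero_add]
    rw [this, S_add_pow hp1 j 0 (d + 1) (pow_pos hp0 j)]
    simp [Ssmall hp1 (show d + 1 < p by omega)]
  have hSb : (p.digits b).sum = (p.digits u).sum + (q + (p.digits w).sum) := by
    rw [hbdef, S_add_pow hp1 j u (q + p * w) hu]
    have : q + p * w = q + w * p ^ 1 := by rw [pow_one]; ring
    rw [this, S_add_pow hp1 1 q w (by rw [pow_one]; omega), Ssmall hp1 (show q < p by omega)]
  have hSvw : (p.digits v).sum ≤ (p.digits w).sum + 1 := by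
    have h := Ssubadd hp w 1
    rw [← hvw, Ssmall hp1 hp1] at h
    exact h
  have hne : (p.digits a).sum + (p.digits b).sum ≠ (p.digits t).sum := by
    rw [hSa, hSb, hSt]
    omega
  refine ⟨![a, b], ?_, ?_⟩
  · rw [Finset.Nat.mem_antidiagonalTuple]
    simp [Fin.sum_univ_two, hab]
  · by_contra hnd
    have heq := ((key hp Finset.univ ![a, b]).2).mp hnd
    rw [Fin.sum_univ_two, Fin.sum_univ_two] at heq
    simp only [Matrix.cons_val_zero, Matrix.cons_val_one, Matrix.head_cons] at heq
    rw [hab] at heq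
    exact hne heq

/-- The number of degree-t monomials in m+1 variables whose multinomial coefficient is
divisible by p is C(m+t,t) − Π_λ C(m+t_λ,t_λ); it vanishes iff t < p, or m = 1 and all
base-p digits of t below the top position equal p − 1 (i.e. t = t_J·p^J − 1). -/
theorem stmt14 (p : ℕ) (hp : p.Prime) (t m : ℕ) (ht : 1 ≤ t) (hm : 1 ≤ m) :
    ((Finset.Nat.antidiagonalTuple (m + 1) t).filter
        (fun e => p ∣ Nat.multinomial Finset.univ e)).card
      = (m + t).choose t
          - ∏ l ∈ Finset.range (t + 1),
              (m + (Nat.digits p t).getD l 0).choose ((Nat.digits p t).getD l 0) ∧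
    (((Finset.Nat.antidiagonalTuple (m + 1) t).filter
        (fun e => p ∣ Nat.multinomial Finset.univ e)).card = 0 ↔
      t < p ∨ (m = 1 ∧ ∀ l, l + 1 < (Nat.digits p t).length →
        (Nat.digits p t).getD l 0 = p - 1)) := by
  have hp1 : 1 < p := hp.one_lt
  have hsplit := Finset.card_filter_add_card_filter_not
    (s := Finset.Nat.antidiagonalTuple (m + 1) t)
    (p := fun e => p ∣ Nat.multinomial Finset.univ e)
  have hcardA : (Finset.Nat.antidiagonalTuple (m + 1) t).card = (m + t).choose t :=
    card_adt m t
  have hN := count_formula hp m t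
  have hlen : (p.digits t).length ≤ t + 1 := by
    rw [Nat.digits_len p t hp1 (by omega)]
    have := Nat.log_le_self p t
    omega
  have hprodeq : ∏ l ∈ Finset.range (t + 1),
      (m + (Nat.digits p t).getD l 0).choose ((Nat.digits p t).getD l 0)
      = ((p.digits t).map (fun d => (m + d).choose d)).prod :=
    prod_range_getD (fun d => (m + d).choose d) (by simp) (t + 1) _ hlen
  have part1 : ((Finset.Nat.antidiagonalTuple (m + 1) t).filter
        (fun e => p ∣ Nat.multinomial Finset.univ e)).card
      = (m + t).choose t
          - ∏ l ∈ Finset.range (t + 1),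
              (m + (Nat.digits p t).getD l 0).choose ((Nat.digits p t).getD l 0) := by
    rw [hprodeq]
    omega
  refine ⟨part1, ?_⟩
  constructor
  · -- card = 0 → t < p ∨ (m = 1 ∧ cond)
    intro h0
    by_contra hcon
    push_neg at hcon
    obtain ⟨hpt, hcond⟩ := hcon
    have hall : ∀ e ∈ Finset.Nat.antidiagonalTuple (m + 1) t,
        ¬ p ∣ Nat.multinomial Finset.univ e := by
      rw [Finset.card_eq_zero, Finset.filter_eq_empty_iff] at h0
      exact h0
    rcases Nat.lt_or_ge m 2 with hm2 | hm2
    · -- m = 1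
      have hm1 : m = 1 := by omega
      subst hm1
      obtain ⟨j, hj, hjd⟩ := hcond rfl
      obtain ⟨e, he, hdvd⟩ := witness_m1 hp ht hj hjd
      exact hall e he hdvd
    · obtain ⟨e, he, hdvd⟩ := witness_m2 hp hm2 hpt
      exact hall e he hdvd
  · rintro (htp | ⟨hm1, hcond⟩)
    · -- t < p
      rw [Finset.card_eq_zero, Finset.filter_eq_empty_iff]
      intro e he hdvd
      rw [Finset.Nat.mem_antidiagonalTuple] at he
      have hspec := Nat.multinomial_spec Finset.univ e
      rw [he] at hspec
      have hdt : Nat.multinomial Finset.univ e ∣ t ! := Dvd.intro_left _ hspec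
      have : p ∣ t ! := hdvd.trans hdt
      have := (Nat.Prime.dvd_factorial hp).mp this
      omega
    · -- m = 1 and digit condition
      subst hm1
      have hmap : (p.digits t).map (fun d => (1 + d).choose d)
          = (p.digits t).map (fun d => d + 1) := by
        apply List.map_congr_left
        intro d _
        rw [Nat.add_comm 1 d, Nat.choose_succ_self_right]
      have hNval : ((Finset.Nat.antidiagonalTuple (1 + 1) t).filter
          (fun e => ¬ p ∣ Nat.multinomial Finset.univ e)).card = t + 1 := by
        rw [hN, hmap, prod_digits_cond (by omega) (p.digits t) hcond,
          Nat.ofDigits_digits]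
      have hAval : (Finset.Nat.antidiagonalTuple (1 + 1) t).card = t + 1 := by
        rw [hcardA, Nat.add_comm 1 t, Nat.choose_succ_self_right]
      omega
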